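/- Let w1,…,wn ∈ Σ*, let L0, L1 ⊆ w1*⋯wn*, and for i ∈ {0,1} let U_i = {(x1,…,xn) ∈ ℕ^n : w1^{x1}⋯wn^{xn} ∈ L_i}. Then L0 is separable from L1 by a bounded regular language if and only if U0 is separable from U1 by a recognizable subset of ℕ^n. -/

import Mathlib

/-- Kleene star of a language, as a set of lists. -/
def LangStar {α : Type*} (K : Set (List α)) : Set (List α) :=
  {w | ∃ ws : List (List α), (∀ u ∈ ws, u ∈ K) ∧ w = ws.flatten}

/-- Concatenation of two languages. -/
def LangConc {α : Type*} (K L : Set (List α)) : Set (List α) :=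
  {w | ∃ u ∈ K, ∃ v ∈ L, w = u ++ v}

/-- Concatenation `L 0 · L 1 ⋯ L (k-1)` of a finite family of languages. -/
def LangConcFn {α : Type*} {k : ℕ} (Ls : Fin k → Set (List α)) : Set (List α) :=
  {w | ∃ ws : Fin k → List α, (∀ j, ws j ∈ Ls j) ∧ w = (List.ofFn ws).flatten}

/-- `w ^ x` : the `x`-fold repetition of the word `w`. -/
def wpow {α : Type*} (w : List α) (x : ℕ) : List α := (List.replicate x w).flatten

/-- The set of factors `F(L) = {w : L ∩ Σ*wΣ* ≠ ∅}`. -/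
def Factors {α : Type*} (L : Set (List α)) : Set (List α) :=
  {w | ∃ u ∈ L, ∃ x y : List α, u = x ++ w ++ y}

/-- The set of factor tuples
`F_n(L) = {(w1,…,wn) : Σ*w1Σ*w2Σ*⋯wnΣ* ∩ L ≠ ∅}`. -/
def FactorTuples {α : Type*} (n : ℕ) (L : Set (List α)) : Set (Fin n → List α) :=
  {w | ∃ u ∈ L, ∃ g : Fin (n + 1) → List α,
      u = (List.ofFn fun i : Fin n => g i.castSucc ++ w i).flatten ++ g (Fin.last n)}

/-- A language is bounded if `L ⊆ w1* ⋯ wn*` for some words `w1,…,wn`. -/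
def IsBoundedLang {α : Type*} (L : Set (List α)) : Prop :=
  ∃ (n : ℕ) (ws : Fin n → List α), L ⊆ LangConcFn fun i => LangStar {ws i}

/-- A language is regular if it is accepted by a finite (deterministic) automaton. -/
def IsRegularLang {α : Type*} (L : Set (List α)) : Prop :=
  ∃ (σ : Type) (_ : Fintype σ) (M : DFA α σ), ∀ w, w ∈ M.accepts ↔ w ∈ L

/-- `FireList T v ts v'` : firing the sequence `ts` of transitions (all from `T`)
leads from configuration `v` to `v'`, keeping all intermediate configurations
nonnegative (automatic, as configurations live in `Fin d → ℕ`). -/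
def FireList {d : ℕ} (T : Set (Fin d → ℤ)) :
    (Fin d → ℕ) → List (Fin d → ℤ) → (Fin d → ℕ) → Prop
  | v, [], v' => v = v'
  | v, τ :: ts, v' => τ ∈ T ∧ ∃ u : Fin d → ℕ,
      (∀ i, (u i : ℤ) = (v i : ℤ) + τ i) ∧ FireList T u ts v'

/-- A labeled vector addition system over the alphabet `α`. -/
structure LVAS (α : Type*) where
  d : ℕ
  T : Finset (Fin d → ℤ)
  s : Fin d → ℕ
  t : Fin d → ℕ
  /-- the labeling `h : T → Σ ∪ {ε}`, with `none` playing the role of `ε` -/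
  lab : (Fin d → ℤ) → Option α

/-- The language of a labeled VAS: labels of firing sequences from source to target. -/
def LVAS.lang {α : Type*} (V : LVAS α) : Set (List α) :=
  {w | ∃ ts : List (Fin V.d → ℤ), FireList (↑V.T) V.s ts V.t ∧ ts.filterMap V.lab = w}

/-- A VAS language is the language of some labeled VAS. -/
def IsVASLang {α : Type*} (L : Set (List α)) : Prop := ∃ V : LVAS α, L = V.lang

/-- Given a decomposition `n = ns 0 + ⋯ + ns (k-1)`, the index in `Fin n` of the
`i`-th position of the `j`-th block. -/
def blockIdx {k n : ℕ} (ns : Fin k → ℕ) (h : ∑ j, ns j = n) (j : Fin k)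
    (i : Fin (ns j)) : Fin n :=
  ⟨(∑ j' ∈ Finset.univ.filter (fun j' => j' < j), ns j') + (i : ℕ), by
    have hj : j ∉ Finset.univ.filter (fun j' => j' < j) := by simp
    have h1 : ∑ j' ∈ insert j (Finset.univ.filter (fun j' => j' < j)), ns j'
        ≤ ∑ j', ns j' := Finset.sum_le_sum_of_subset (Finset.subset_univ _)
    rw [Finset.sum_insert hj] at h1
    have h2 := i.isLt
    omega⟩

/-- The product set `F_{n1}(L1) × ⋯ × F_{nk}(Lk) ⊆ (Σ*)^n` for a decomposition
`n = n1 + ⋯ + nk`: those `n`-tuples whose `j`-th block belongs to `F_{nj}(Lj)`. -/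
def ProdFT {α : Type*} {k n : ℕ} (ns : Fin k → ℕ) (Ls : Fin k → Set (List α))
    (h : ∑ j, ns j = n) : Set (Fin n → List α) :=
  {w | ∀ j : Fin k,
    (fun i : Fin (ns j) => w (blockIdx ns h j i)) ∈ FactorTuples (ns j) (Ls j)}

/-- An `n`-dimensional unboundedness predicate. -/
def IsUnbPred {α : Type*} (n : ℕ) (p : Set (Fin n → List α) → Prop) : Prop :=
  (∀ S T : Set (Fin n → List α), p S → S ⊆ T → p T) ∧
  (∀ S T : Set (Fin n → List α), p (S ∪ T) → p S ∨ p T) ∧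
  (∀ (k : ℕ) (Ls : Fin k → Set (List α)), p (FactorTuples n (LangConcFn Ls)) →
     ∃ (ns : Fin k → ℕ) (h : ∑ j, ns j = n), p (ProdFT ns Ls h))

/-- Downward closure of a set of `n`-tuples of words w.r.t. the (scattered) subword
ordering in each component. -/
def dclT {α : Type*} {n : ℕ} (S : Set (Fin n → List α)) : Set (Fin n → List α) :=
  {u | ∃ v ∈ S, ∀ i, List.Sublist (u i) (v i)}

/-- `numF K w = |w|_K`, the largest `m` such that `m` non-overlapping factors from `K`
occur in `w` in order. -/
noncomputable def numF {α : Type*} (K : Set (List α)) (w : List α) : ℕ :=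
  sSup {m | ∃ ws : Fin m → List α, (∀ i, ws i ∈ K) ∧ ws ∈ FactorTuples m {w}}

/-- `cWrap c L = cLc = {cuc : u ∈ L}`. -/
def cWrap {α : Type*} (c : α) (L : Set (List α)) : Set (List α) :=
  {w | ∃ u ∈ L, w = c :: (u ++ [c])}

/-- `cSepStar c L = c(Lc)* = {c u1 c u2 c ⋯ um c : m ≥ 0, u1,…,um ∈ L}`. -/
def cSepStar {α : Type*} (c : α) (L : Set (List α)) : Set (List α) :=
  {w | ∃ us : List (List α), (∀ u ∈ us, u ∈ L) ∧
      w = c :: (us.map (fun u => u ++ [c])).flatten}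

/-- A subset of `ℕ^n` is recognizable if it is saturated by an additive monoid
morphism into a finite monoid. -/
def IsRecognizable {n : ℕ} (U : Set (Fin n → ℕ)) : Prop :=
  ∃ (M : Type) (_ : AddMonoid M) (_ : Finite M) (φ : (Fin n → ℕ) →+ M),
    U = φ ⁻¹' (φ '' U)

/-- `U ⊆ ℕ^n` is a section of a VAS reachability set. -/
def IsVASReachSection {n : ℕ} (U : Set (Fin n → ℕ)) : Prop :=
  ∃ (N : ℕ) (T : Finset (Fin N → ℤ)) (s : Fin N → ℕ) (I : Finset (Fin N))
    (x : Fin N → ℕ) (e : Fin n → Fin N),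
    StrictMono e ∧ (∀ j, e j ∉ I) ∧ (∀ i, i ∉ I → ∃ j, e j = i) ∧
    U = {u | ∃ v : Fin N → ℕ, (∃ ts, FireList (↑T) s ts v) ∧
          (∀ i ∈ I, v i = x i) ∧ (∀ j, v (e j) = u j)}


namespace Aux
variable {α : Type*}

def Wd {n : ℕ} (ws : Fin n → List α) (x : Fin n → ℕ) : List α :=
  (List.ofFn fun i => wpow (ws i) (x i)).flatten

theorem wpow_zero (w : List α) : wpow w 0 = [] := rfl

theorem wpow_one (w : List α) : wpow w 1 = w := by simp [wpow]

theorem wpow_add (w : List α) (a b : ℕ) : wpow w (a + b) = wpow w a ++ wpow w b := by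
  unfold wpow
  rw [List.replicate_add, List.flatten_append]

theorem wpow_eq_nil {w : List α} {k : ℕ} : wpow w k = [] ↔ k = 0 ∨ w = [] := by
  cases k with
  | zero => simp [wpow]
  | succ k => simp [wpow, List.replicate_succ]; intro h; simp [h]

theorem Wd_succ {n : ℕ} (ws : Fin (n+1) → List α) (x : Fin (n+1) → ℕ) :
    Wd ws x = wpow (ws 0) (x 0) ++ Wd (fun i => ws i.succ) (fun i => x i.succ) := by
  simp [Wd, List.ofFn_succ]

theorem Wd_eq_nil {n : ℕ} {ws : Fin n → List α} {x : Fin n → ℕ} :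
    Wd ws x = [] ↔ ∀ i, x i ≠ 0 → ws i = [] := by
  simp only [Wd, List.flatten_eq_nil_iff, List.mem_ofFn]
  constructor
  · intro h i hx
    rcases wpow_eq_nil.1 (h (wpow (ws i) (x i)) ⟨i, rfl⟩) with h' | h'
    · exact absurd h' hx
    · exact h'
  · rintro h _ ⟨i, rfl⟩
    by_cases hx : x i = 0
    · simp [hx, wpow_zero]
    · simp [h i hx, wpow_eq_nil]

end Aux

namespace Aux
variable {α : Type*}

theorem Wd_zero {n : ℕ} (ws : Fin n → List α) : Wd ws (fun _ => 0) = [] := by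
  simp [Wd_eq_nil]

theorem Wd_split {n : ℕ} (ws : Fin n → List α) (x y : Fin n → ℕ)
    (H : ∀ i i', x i ≠ 0 → y i' ≠ 0 → i ≤ i') :
    Wd ws (x + y) = Wd ws x ++ Wd ws y := by
  induction n with
  | zero => simp [Wd]
  | succ n ih =>
    rw [Wd_succ, Wd_succ ws x, Wd_succ ws y]
    by_cases hy : y 0 = 0
    · have hx : ∀ i : Fin n, ((x + y) i.succ) = (fun i : Fin n => x i.succ + y i.succ) i :=
        fun i => rfl
      have : Wd (fun i : Fin n => ws i.succ) (fun i => (x + y) i.succ)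
          = Wd (fun i : Fin n => ws i.succ) (fun i => x i.succ)
            ++ Wd (fun i : Fin n => ws i.succ) (fun i => y i.succ) := by
        have := ih (fun i : Fin n => ws i.succ) (fun i => x i.succ) (fun i => y i.succ)
          (fun i i' hxi hyi => by
            have := H i.succ i'.succ hxi hyi
            exact Fin.succ_le_succ_iff.mp this)
        exact this
      rw [show ((x+y) 0) = x 0 + y 0 from rfl, hy] at *
      simp only [Nat.add_zero]
      rw [this, wpow_zero]
      simp
    · -- y 0 ≠ 0, so x vanishes on successors
      have hx : ∀ i : Fin n, x i.succ = 0 := by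
        intro i
        by_contra hxi
        have := H i.succ 0 hxi hy
        exact absurd this (by simp [Fin.le_def])
      have h1 : Wd (fun i : Fin n => ws i.succ) (fun i => x i.succ) = [] := by
        rw [Wd_eq_nil]; intro i hi; exact absurd (hx i) hi
      have h2 : (fun i : Fin n => (x + y) i.succ) = fun i => y i.succ := by
        funext i; simp [Pi.add_apply, hx i]
      rw [show ((x+y) 0) = x 0 + y 0 from rfl, wpow_add, h2, h1]
      simp

theorem Wd_single {n : ℕ} (ws : Fin n → List α) (i : Fin n) :
    Wd ws (Pi.single i 1) = ws i := by
  induction n with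
  | zero => exact absurd i.isLt (by omega)
  | succ n ih =>
    rw [Wd_succ]
    rcases Fin.eq_zero_or_eq_succ i with rfl | ⟨j, rfl⟩
    · have h : (fun k : Fin n => (Pi.single (0 : Fin (n+1)) 1 : Fin (n+1) → ℕ) k.succ)
          = fun _ => 0 := by
        funext k; exact Pi.single_eq_of_ne (Fin.succ_ne_zero k) 1
      rw [h, Wd_zero, Pi.single_eq_same, wpow_one, List.append_nil]
    · have h0 : (Pi.single (j.succ) 1 : Fin (n+1) → ℕ) 0 = 0 :=
        Pi.single_eq_of_ne (Ne.symm (Fin.succ_ne_zero j)) 1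
      have h : (fun k : Fin n => (Pi.single (j.succ) 1 : Fin (n+1) → ℕ) k.succ)
          = Pi.single j 1 := by
        funext k
        by_cases hk : k = j
        · subst hk; simp
        · rw [Pi.single_eq_of_ne (fun h => hk (Fin.succ_injective _ h)) 1,
            Pi.single_eq_of_ne hk 1]
      rw [h0, h, wpow_zero, List.nil_append, ih]

end Aux

namespace Aux
variable {α : Type*}

theorem Wd_dec {n : ℕ} {ws : Fin n → List α} {x : Fin n → ℕ} (h : Wd ws x ≠ []) :
    ∃ (i : Fin n) (x' y : Fin n → ℕ), ws i ≠ [] ∧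
      (∀ i', i < i' → x' i' = 0) ∧ (∀ i', i' ≤ i → y i' = 0) ∧
      (∀ i', y i' ≠ 0 → ws i' = []) ∧ (∀ i', y i' ≤ x i') ∧
      x = x' + Pi.single i 1 + y ∧ Wd ws x = Wd ws x' ++ ws i := by
  classical
  obtain ⟨i, hxi, hwsi, hmax⟩ :
      ∃ i, x i ≠ 0 ∧ ws i ≠ [] ∧ ∀ j, x j ≠ 0 → ws j ≠ [] → j ≤ i := by
    have hne : ∃ i, x i ≠ 0 ∧ ws i ≠ [] := by
      by_contra hc
      push_neg at hc
      exact h (Wd_eq_nil.2 fun i hi => hc i hi)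
    obtain ⟨i0, hi0⟩ := hne
    have hsne : (Finset.univ.filter (fun i => x i ≠ 0 ∧ ws i ≠ [])).Nonempty :=
      ⟨i0, by simp [hi0.1, hi0.2]⟩
    refine ⟨Finset.max' _ hsne, ?_, ?_, ?_⟩
    · have := Finset.max'_mem _ hsne
      simp only [Finset.mem_filter] at this
      exact this.2.1
    · have := Finset.max'_mem _ hsne
      simp only [Finset.mem_filter] at this
      exact this.2.2
    · intro j h1 h2
      exact Finset.le_max' _ j (by simp [h1, h2])
  set x' : Fin n → ℕ := fun i' => if i' = i then x i - 1 else if i < i' then 0 else x i'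
    with hx'
  set y : Fin n → ℕ := fun i' => if i < i' then x i' else 0 with hy'
  have hy0 : ∀ i', i' ≤ i → y i' = 0 := by
    intro i' hle
    have : ¬ i < i' := not_lt_of_ge hle
    simp [hy', this]
  have hyemp : ∀ i', y i' ≠ 0 → ws i' = [] := by
    intro i' hy
    by_cases hlt : i < i'
    · simp only [hy', if_pos hlt] at hy
      by_contra hws
      exact absurd (hmax i' hy hws) (not_le_of_gt hlt)
    · simp [hy', hlt] at hy
  have hyle : ∀ i', y i' ≤ x i' := by
    intro i'
    by_cases hlt : i < i' <;> simp [hy', hlt]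
  have hx'0 : ∀ i', i < i' → x' i' = 0 := by
    intro i' hlt
    have hne : i' ≠ i := fun hh => absurd hh.le (not_le_of_gt hlt)
    simp [hx', hne, hlt]
  have hxeq : x = x' + Pi.single i 1 + y := by
    funext i'
    simp only [Pi.add_apply, hx', hy']
    rcases lt_trichotomy i' i with hlt | hrfl | hlt
    · rw [if_neg (ne_of_lt hlt), if_neg (not_lt_of_ge hlt.le), if_neg (not_lt_of_ge hlt.le),
        Pi.single_eq_of_ne (ne_of_lt hlt) 1]
      omega
    · subst hrfl
      rw [if_pos rfl, if_neg (lt_irrefl _), Pi.single_eq_same]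
      omega
    · rw [if_neg (ne_of_gt hlt), if_pos hlt, if_pos hlt,
        Pi.single_eq_of_ne (ne_of_gt hlt) 1]
      omega
  have hxeq2 : x = x' + (Pi.single i 1 + y) := by rw [hxeq, add_assoc]
  have hWy : Wd ws y = [] := Wd_eq_nil.2 hyemp
  refine ⟨i, x', y, hwsi, hx'0, hy0, hyemp, hyle, hxeq, ?_⟩
  calc Wd ws x = Wd ws (x' + (Pi.single i 1 + y)) := by rw [← hxeq2]
    _ = Wd ws x' ++ Wd ws (Pi.single i 1 + y) := by
        apply Wd_split
        intro a b ha hb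
        have ha' : a ≤ i := by
          by_contra hab
          have hab' : i < a := lt_of_not_ge hab
          have : x' a = 0 := hx'0 a hab'
          exact ha this
        have hb' : i ≤ b := by
          by_cases hbe : b = i
          · exact le_of_eq hbe.symm
          · simp only [Pi.add_apply] at hb
            by_cases hlt : i < b
            · exact le_of_lt hlt
            · rw [Pi.single_eq_of_ne hbe 1] at hb
              rw [hy0 b (le_of_not_gt hlt)] at hb
              exact absurd rfl hb
        exact le_trans ha' hb'
    _ = Wd ws x' ++ (Wd ws (Pi.single i 1) ++ Wd ws y) := by
        rw [Wd_split ws (Pi.single i 1) y]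
        intro a b ha hb
        have ha' : a = i := by
          by_contra hab
          rw [Pi.single_eq_of_ne hab 1] at ha
          exact ha rfl
        subst ha'
        by_contra hab
        exact hb (hy0 b (le_of_not_ge (fun hh => hab hh)))
    _ = Wd ws x' ++ ws i := by rw [hWy, Wd_single, List.append_nil]

end Aux

namespace Aux
variable {α : Type*} {n : ℕ} {M : Type} [AddMonoid M]

variable (ws : Fin n → List α) (φ : (Fin n → ℕ) →+ M) (F : Set M)

/-- NFA states: `none` is the initial state; `some ⟨⟨i,j⟩,m⟩` means we are inside
a copy of `ws i`, having read characters `0..j` of it, with committed value `m`. -/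
abbrev St := Option ((Σ i : Fin n, Fin ((ws i).length)) × M)

/-- The invariant: which states are reachable after reading `u`. -/
def InvP (u : List α) : St ws (M := M) → Prop
  | none => u = []
  | some ⟨⟨i, j⟩, m⟩ => ∃ x : Fin n → ℕ, (∀ i', i < i' → x i' = 0) ∧
      u = Wd ws x ++ (ws i).take ((j : ℕ)+1) ∧ m = φ (x + Pi.single i 1)

/-- The transition relation. -/
def Tr : St ws (M := M) → α → St ws (M := M) → Prop
  | none, a, q' => ∃ (i : Fin n) (hi : 0 < (ws i).length) (x : Fin n → ℕ),
      (∀ i', i < i' → x i' = 0) ∧ (∀ i', x i' ≠ 0 → ws i' = []) ∧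
      (ws i).take 1 = [a] ∧ q' = some ⟨⟨i, ⟨0, hi⟩⟩, φ (x + Pi.single i 1)⟩
  | some ⟨⟨i, j⟩, m⟩, a, q' =>
      (∃ h : (j : ℕ) + 1 < (ws i).length,
        (ws i).take ((j : ℕ)+2) = (ws i).take ((j : ℕ)+1) ++ [a] ∧
        q' = some ⟨⟨i, ⟨(j : ℕ)+1, h⟩⟩, m⟩)
      ∨ ((j : ℕ) + 1 = (ws i).length ∧
        ∃ (i' : Fin n) (hi' : 0 < (ws i').length) (y : Fin n → ℕ),
          i ≤ i' ∧ (∀ i'', i'' ≤ i → y i'' = 0) ∧ (∀ i'', i' < i'' → y i'' = 0) ∧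
          (∀ i'', y i'' ≠ 0 → ws i'' = []) ∧ (ws i').take 1 = [a] ∧
          q' = some ⟨⟨i', ⟨0, hi'⟩⟩, m + φ (y + Pi.single i' 1)⟩)

/-- The accepting condition. -/
def AccP : St ws (M := M) → Prop
  | none => ∃ x : Fin n → ℕ, (∀ i, x i ≠ 0 → ws i = []) ∧ φ x ∈ F
  | some ⟨⟨i, j⟩, m⟩ => (j : ℕ) + 1 = (ws i).length ∧
      ∃ y : Fin n → ℕ, (∀ i', i' ≤ i → y i' = 0) ∧ (∀ i', y i' ≠ 0 → ws i' = []) ∧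
        m + φ y ∈ F

def theNFA : NFA α (St ws (M := M)) where
  step q a := {q' | Tr ws φ q a q'}
  start := {none}
  accept := {q | AccP ws φ F q}

end Aux

namespace Aux
variable {α : Type*} {n : ℕ} {M : Type} [AddMonoid M]
variable (ws : Fin n → List α) (φ : (Fin n → ℕ) →+ M) (F : Set M)

theorem take_one_pos (l : List α) (h : 0 < l.length) : l.take 1 = [l.get ⟨0, h⟩] := by
  cases l with
  | nil => simp at h
  | cons a t => simp

theorem concat_inj' {u v : List α} {a b : α} (h : u ++ [a] = v ++ [b]) : u = v ∧ a = b := by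
  have := List.append_inj' h rfl
  simpa using this

theorem invp_step (u : List α) (a : α) (q' : St ws (M := M)) :
    InvP ws φ (u ++ [a]) q' ↔ ∃ q, InvP ws φ u q ∧ Tr ws φ q a q' := by
  constructor
  · intro hq'
    rcases q' with _ | ⟨⟨i', j'⟩, m'⟩
    · exact absurd hq' (by simp [InvP])
    · obtain ⟨x, hsupp, hu, hm⟩ := hq'
      rcases Nat.eq_zero_or_eq_succ_pred (j' : ℕ) with hj | hj
      · -- j' = 0 : just started a copy of ws i'
        have hi' : 0 < (ws i').length := j'.pos
        rw [hj] at hu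
        rw [take_one_pos (ws i') hi'] at hu
        have hsplit := concat_inj' (by simpa using hu)
        obtain ⟨huu, rfl⟩ := hsplit
        have htake1 : (ws i').take 1 = [(ws i').get ⟨0, hi'⟩] := take_one_pos _ hi'
        by_cases hWx : Wd ws x = []
        · refine ⟨none, by simp [InvP, huu, hWx], ?_⟩
          refine ⟨i', hi', x, hsupp, Wd_eq_nil.1 hWx, htake1, ?_⟩
          have hjj : (⟨0, hi'⟩ : Fin (ws i').length) = j' := Fin.ext (by simp [hj])
          rw [hjj, hm]
        · obtain ⟨i, x', y, hwsi, hx'0, hy0, hyemp, hyle, hxeq, hWeq⟩ := Wd_dec hWx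
          have hlen : 0 < (ws i).length := List.length_pos_iff.2 hwsi
          refine ⟨some ⟨⟨i, ⟨(ws i).length - 1, by omega⟩⟩, φ (x' + Pi.single i 1)⟩, ?_, ?_⟩
          · refine ⟨x', hx'0, ?_, rfl⟩
            rw [huu, hWeq]
            congr 1
            rw [show (ws i).length - 1 + 1 = (ws i).length by omega, List.take_length]
          · refine Or.inr ⟨by simp only [Fin.val_mk]; omega, i', hi', y, ?_, hy0, ?_, hyemp, htake1, ?_⟩
            · -- i ≤ i'
              by_contra hlt
              have hlt' : i' < i := lt_of_not_ge hlt
              have : x i = 0 := hsupp i hlt'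
              rw [hxeq] at this
              simp [Pi.add_apply, Pi.single_eq_same] at this
            · intro i'' hi''
              have := hsupp i'' hi''
              have := hyle i''
              omega
            · have hjj : (⟨0, hi'⟩ : Fin (ws i').length) = j' := Fin.ext (by simp [hj])
              have hm2 : m' = φ (x' + Pi.single i 1) + φ (y + Pi.single i' 1) := by
                rw [hm, hxeq, ← map_add]
                exact congrArg φ (by abel)
              rw [hjj, hm2]
      · -- (j' : ℕ) = k + 1
        set k := (j' : ℕ) - 1 with hk
        have hj' : (j' : ℕ) = k + 1 := hj
        have h2 : k + 1 < (ws i').length := hj' ▸ j'.isLt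
        have htk : (ws i').take (k + 2) = (ws i').take (k+1) ++ [(ws i').get ⟨k+1, h2⟩] := by
          rw [List.take_succ]
          congr 1
          simp [List.getElem?_eq_getElem h2, List.get_eq_getElem]
        rw [hj', show k + 1 + 1 = k + 2 from rfl, htk, ← List.append_assoc] at hu
        obtain ⟨huu, rfl⟩ := concat_inj' hu
        refine ⟨some ⟨⟨i', ⟨k, by omega⟩⟩, m'⟩, ⟨x, hsupp, huu, hm⟩, ?_⟩
        refine Or.inl ⟨by simpa using h2, ?_, ?_⟩
        · simpa using htk
        · have hjj : (⟨k + 1, by simpa using h2⟩ : Fin (ws i').length) = j' :=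
            Fin.ext (by simp [hj'])
          rw [hjj]
  · rintro ⟨q, hq, htr⟩
    rcases q with _ | ⟨⟨i, j⟩, m⟩
    · obtain ⟨i, hi, x, hsupp, hemp, htake, rfl⟩ := htr
      have hu : u = [] := hq
      refine ⟨x, hsupp, ?_, rfl⟩
      have : Wd ws x = [] := Wd_eq_nil.2 hemp
      rw [hu, this]
      simpa using htake.symm
    · obtain ⟨x, hsupp, hu, hm⟩ := hq
      rcases htr with ⟨h, htake, rfl⟩ | ⟨hlen, i', hi', y, hii', hy0, hy1, hyemp, htake, rfl⟩
      · refine ⟨x, hsupp, ?_, hm⟩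
        rw [hu, List.append_assoc, ← htake]
      · refine ⟨x + Pi.single i 1 + y, ?_, ?_, ?_⟩
        · intro i'' hi''
          have h1 : x i'' = 0 := hsupp i'' (lt_of_le_of_lt hii' hi'')
          have h2 : (Pi.single i 1 : Fin n → ℕ) i'' = 0 :=
            Pi.single_eq_of_ne (ne_of_gt (lt_of_le_of_lt hii' hi'')) 1
          have h3 : y i'' = 0 := hy1 i'' hi''
          simp [Pi.add_apply, h1, h2, h3]
        · have hws : (ws i).take ((j : ℕ) + 1) = ws i := by
            rw [hlen, List.take_length]
          have hsplit1 : Wd ws (x + Pi.single i 1 + y) = Wd ws x ++ ws i := by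
            rw [add_assoc]
            rw [Wd_split ws x (Pi.single i 1 + y) ?_]
            · congr 1
              rw [Wd_split ws (Pi.single i 1) y ?_]
              · rw [Wd_single, Wd_eq_nil.2 hyemp, List.append_nil]
              · intro a' b' ha' hb'
                have ha'' : a' = i := by
                  by_contra hne
                  rw [Pi.single_eq_of_ne hne 1] at ha'
                  exact ha' rfl
                subst ha''
                by_contra hab
                exact hb' (hy0 b' (le_of_not_ge fun hh => hab hh))
            · intro a' b' ha' hb'
              have ha'' : a' ≤ i := by
                by_contra hgt
                exact ha' (hsupp a' (lt_of_not_ge hgt))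
              have hb'' : i ≤ b' := by
                by_cases hbe : b' = i
                · exact le_of_eq hbe.symm
                · simp only [Pi.add_apply] at hb'
                  rw [Pi.single_eq_of_ne hbe 1] at hb'
                  by_cases hlt : i < b'
                  · exact le_of_lt hlt
                  · rw [hy0 b' (le_of_not_gt hlt)] at hb'
                    exact absurd rfl hb'
              exact le_trans ha'' hb''
          rw [hsplit1, hu, hws]
          congr 1
          simpa using htake.symm
        · rw [hm, ← map_add]
          congr 1
          funext t
          simp [Pi.add_apply]
          ring

end Aux

namespace Aux
variable {α : Type*} {n : ℕ} {M : Type} [AddMonoid M]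
variable (ws : Fin n → List α) (φ : (Fin n → ℕ) →+ M) (F : Set M)

theorem invp_eval (u : List α) (q : St ws (M := M)) :
    q ∈ (theNFA ws φ F).eval u ↔ InvP ws φ u q := by
  induction u using List.reverseRecOn generalizing q with
  | nil =>
    show q ∈ ({none} : Set (St ws (M := M))) ↔ _
    constructor
    · rintro rfl; rfl
    · intro hq
      rcases q with _ | ⟨⟨i, j⟩, m⟩
      · rfl
      · obtain ⟨x, _, hu, _⟩ := hq
        have htne : (ws i).take ((j : ℕ) + 1) ≠ [] := by
          rw [Ne, List.take_eq_nil_iff]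
          push_neg
          refine ⟨by omega, ?_⟩
          intro hnil
          have := j.pos
          simp [hnil] at this
        rcases List.append_eq_nil_iff.1 hu.symm with ⟨-, h2⟩
        exact absurd h2 htne
  | append_singleton u a ih =>
    rw [NFA.eval_append_singleton, NFA.mem_stepSet, invp_step]
    constructor
    · rintro ⟨t, ht, htr⟩
      exact ⟨t, (ih t).1 ht, htr⟩
    · rintro ⟨t, ht, htr⟩
      exact ⟨t, (ih t).2 ht, htr⟩

theorem nfa_correct (u : List α) :
    u ∈ (theNFA ws φ F).accepts ↔ ∃ x : Fin n → ℕ, u = Wd ws x ∧ φ x ∈ F := by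
  constructor
  · rintro ⟨q, hacc, hev⟩
    rw [invp_eval] at hev
    rcases q with _ | ⟨⟨i, j⟩, m⟩
    · obtain ⟨x, hemp, hF⟩ := hacc
      exact ⟨x, by rw [hev, Wd_eq_nil.2 hemp], hF⟩
    · obtain ⟨hlen, y, hy0, hyemp, hF⟩ := hacc
      obtain ⟨x, hsupp, hu, hm⟩ := hev
      refine ⟨x + Pi.single i 1 + y, ?_, ?_⟩
      · have hws : (ws i).take ((j : ℕ) + 1) = ws i := by
          rw [hlen, List.take_length]
        rw [hu, hws, add_assoc, Wd_split ws x (Pi.single i 1 + y) ?_]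
        · rw [Wd_split ws (Pi.single i 1) y ?_, Wd_single, Wd_eq_nil.2 hyemp,
            List.append_nil]
          intro a' b' ha' hb'
          have ha'' : a' = i := by
            by_contra hne
            rw [Pi.single_eq_of_ne hne 1] at ha'
            exact ha' rfl
          subst ha''
          by_contra hab
          exact hb' (hy0 b' (le_of_not_ge fun hh => hab hh))
        · intro a' b' ha' hb'
          have ha'' : a' ≤ i := by
            by_contra hgt
            exact ha' (hsupp a' (lt_of_not_ge hgt))
          have hb'' : i ≤ b' := by
            by_cases hbe : b' = i
            · exact le_of_eq hbe.symm
            · simp only [Pi.add_apply] at hb'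
              rw [Pi.single_eq_of_ne hbe 1] at hb'
              by_cases hlt : i < b'
              · exact le_of_lt hlt
              · rw [hy0 b' (le_of_not_gt hlt)] at hb'
                exact absurd rfl hb'
          exact le_trans ha'' hb''
      · have : x + Pi.single i 1 + y = (x + Pi.single i 1) + y := rfl
        rw [this, map_add, ← hm]
        exact hF
  · rintro ⟨x, rfl, hF⟩
    by_cases hWx : Wd ws x = []
    · refine ⟨none, ⟨x, Wd_eq_nil.1 hWx, hF⟩, ?_⟩
      rw [invp_eval]
      exact hWx
    · obtain ⟨i, x', y, hwsi, hx'0, hy0, hyemp, hyle, hxeq, hWeq⟩ := Wd_dec hWx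
      have hlen : 0 < (ws i).length := List.length_pos_iff.2 hwsi
      refine ⟨some ⟨⟨i, ⟨(ws i).length - 1, by omega⟩⟩, φ (x' + Pi.single i 1)⟩, ?_, ?_⟩
      · refine ⟨by simp only [Fin.val_mk]; omega, y, hy0, hyemp, ?_⟩
        rw [← map_add, ← hxeq]
        exact hF
      · rw [invp_eval]
        refine ⟨x', hx'0, ?_, rfl⟩
        rw [hWeq]
        congr 1
        rw [show (ws i).length - 1 + 1 = (ws i).length by omega, List.take_length]

end Aux

namespace Aux
variable {α : Type*} {n : ℕ}

theorem flatten_of_all_eq {w : List α} : ∀ {l : List (List α)},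
    (∀ v ∈ l, v = w) → l.flatten = wpow w l.length := by
  intro l
  induction l with
  | nil => intro _; rfl
  | cons a t ih =>
    intro h
    rw [List.flatten_cons, h a (by simp), ih (fun v hv => h v (by simp [hv])),
      List.length_cons]
    rw [show t.length + 1 = 1 + t.length by omega, wpow_add, wpow_one]

theorem mem_concfn_iff (ws : Fin n → List α) (u : List α) :
    u ∈ LangConcFn (fun i => LangStar {ws i}) ↔ ∃ x : Fin n → ℕ, u = Wd ws x := by
  constructor
  · rintro ⟨ws', hmem, rfl⟩
    choose ls hls1 hls2 using hmem
    refine ⟨fun j => (ls j).length, ?_⟩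
    unfold Wd
    congr 1
    apply congrArg List.ofFn
    funext j
    rw [hls2 j, flatten_of_all_eq (fun v hv => hls1 j v hv)]
  · rintro ⟨x, rfl⟩
    refine ⟨fun i => wpow (ws i) (x i), fun j => ⟨List.replicate (x j) (ws j), by simp, rfl⟩, rfl⟩

/-- The action of a word on the states of a DFA. -/
def act {σ : Type} (Md : DFA α σ) (w : List α) : Function.End σ :=
  fun t => Md.evalFrom t w

/-- evalFrom along a power of a word is a power of the word action. -/
theorem evalFrom_wpow {σ : Type} (Md : DFA α σ) (w : List α) (k : ℕ) (s : σ) :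
    Md.evalFrom s (wpow w k) = ((act Md w) ^ k) s := by
  induction k generalizing s with
  | zero => rfl
  | succ k ih =>
    have hw : wpow w (k + 1) = w ++ wpow w k := by
      unfold wpow
      rw [List.replicate_succ, List.flatten_cons]
    rw [hw, DFA.evalFrom_of_append, ih, pow_succ]
    rfl

theorem eval_Wd_congr {σ : Type} (Md : DFA α σ) :
    ∀ {n : ℕ} (ws : Fin n → List α) (x y : Fin n → ℕ),
      (∀ i, (act Md (ws i)) ^ (x i) = (act Md (ws i)) ^ (y i)) →
      ∀ s, Md.evalFrom s (Wd ws x) = Md.evalFrom s (Wd ws y) := by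
  intro n
  induction n with
  | zero =>
    intro ws x y _ s
    have h1 : Wd ws x = [] := by simp [Wd]
    have h2 : Wd ws y = [] := by simp [Wd]
    rw [h1, h2]
  | succ n ih =>
    intro ws x y h s
    rw [Wd_succ, Wd_succ, DFA.evalFrom_of_append, DFA.evalFrom_of_append,
      evalFrom_wpow, evalFrom_wpow, h 0]
    exact ih (fun i => ws i.succ) (fun i => x i.succ) (fun i => y i.succ)
      (fun i => h i.succ) _

end Aux

/-- For `L0, L1 ⊆ w1*⋯wn*` and
`U_i = {(x1,…,xn) : w1^{x1}⋯wn^{xn} ∈ L_i}`, `L0` is separable from `L1` by a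
bounded regular language iff `U0` is separable from `U1` by a recognizable subset
of `ℕ^n`. -/
theorem separability_bounded_regular_iff_recognizable {α : Type} [Fintype α]
    {n : ℕ} (ws : Fin n → List α) (L0 L1 : Set (List α))
    (h0 : L0 ⊆ LangConcFn fun i => LangStar {ws i})
    (h1 : L1 ⊆ LangConcFn fun i => LangStar {ws i}) :
    (∃ S : Set (List α), IsRegularLang S ∧ IsBoundedLang S ∧ L0 ⊆ S ∧ L1 ∩ S = ∅) ↔
    (∃ U : Set (Fin n → ℕ), IsRecognizable U ∧
      {x : Fin n → ℕ | (List.ofFn fun i => wpow (ws i) (x i)).flatten ∈ L0} ⊆ U ∧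
      {x : Fin n → ℕ | (List.ofFn fun i => wpow (ws i) (x i)).flatten ∈ L1} ∩ U = ∅) := by
  classical
  constructor
  · rintro ⟨S, ⟨σ, hσ, Md, hMd⟩, _hbound, hL0, hL1⟩
    set f : Fin n → Function.End σ := fun i => Aux.act Md (ws i) with hf
    set Φ : (Fin n → ℕ) →+ Additive (Fin n → Function.End σ) :=
      { toFun := fun x => Additive.ofMul (fun i => (f i) ^ (x i))
        map_zero' := by
          show Additive.ofMul (fun i => f i ^ ((0 : Fin n → ℕ) i)) = Additive.ofMul 1
          apply congrArg
          funext i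
          exact pow_zero (f i)
        map_add' := by
          intro x y
          show Additive.ofMul (fun i => f i ^ (x i + y i))
            = Additive.ofMul ((fun i => f i ^ (x i)) * (fun i => f i ^ (y i)))
          apply congrArg
          funext i
          exact pow_add (f i) (x i) (y i) } with hΦ
    refine ⟨{x | Aux.Wd ws x ∈ S}, ⟨Additive (Fin n → Function.End σ), inferInstance,
      by exact (inferInstance : Finite (Fin n → σ → σ)), Φ, ?_⟩, ?_, ?_⟩
    · apply Set.Subset.antisymm
      · intro x hx
        exact ⟨x, hx, rfl⟩
      · rintro x ⟨y, hy, hxy⟩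
        have hpow : ∀ i, f i ^ (y i) = f i ^ (x i) := by
          intro i
          have h' := congrArg Additive.toMul hxy
          exact congrFun h' i
        have hev := Aux.eval_Wd_congr Md ws y x hpow Md.start
        have hacc : Aux.Wd ws y ∈ Md.accepts ↔ Aux.Wd ws x ∈ Md.accepts := by
          rw [DFA.mem_accepts, DFA.mem_accepts]
          show Md.evalFrom Md.start _ ∈ _ ↔ Md.evalFrom Md.start _ ∈ _
          rw [hev]
        exact (hMd _).1 (hacc.1 ((hMd _).2 hy))
    · intro x hx
      exact hL0 hx
    · rw [Set.eq_empty_iff_forall_notMem]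
      rintro x ⟨h1', h2'⟩
      have : Aux.Wd ws x ∈ L1 ∩ S := ⟨h1', h2'⟩
      rw [hL1] at this
      exact this
  · rintro ⟨U, ⟨M, instA, instF, φ, hU⟩, hU0, hU1⟩
    refine ⟨{u | ∃ x, u = Aux.Wd ws x ∧ φ x ∈ φ '' U}, ?_, ?_, ?_, ?_⟩
    · haveI : Fintype M := Fintype.ofFinite M
      haveI : Finite (Aux.St ws (M := M)) := by
        unfold Aux.St
        infer_instance
      refine ⟨Set (Aux.St ws (M := M)), Fintype.ofFinite _,
        (Aux.theNFA ws φ (φ '' U)).toDFA, ?_⟩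
      intro w
      rw [NFA.toDFA_correct]
      exact Aux.nfa_correct ws φ _ w
    · refine ⟨n, ws, ?_⟩
      rintro u ⟨x, rfl, -⟩
      exact (Aux.mem_concfn_iff ws _).2 ⟨x, rfl⟩
    · intro u hu
      obtain ⟨x, rfl⟩ := (Aux.mem_concfn_iff ws u).1 (h0 hu)
      exact ⟨x, rfl, Set.mem_image_of_mem φ (hU0 hu)⟩
    · rw [Set.eq_empty_iff_forall_notMem]
      rintro u ⟨hu1, x, rfl, hφ⟩
      have hxU : x ∈ U := by rw [hU]; exact hφ
      have hmem : x ∈ ({x : Fin n → ℕ |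
          (List.ofFn fun i => wpow (ws i) (x i)).flatten ∈ L1} ∩ U) := ⟨hu1, hxU⟩
      rw [hU1] at hmem
      exact hmem
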